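/- Let H be a spanning subgraph of K_n and c : E(K_n) → {−1,1}. Then ∑_{uv} c(δ_H(uv)), summed over all unordered pairs uv of distinct vertices, equals ∑_{uv ∈ E(H)} (2n−4)·c(uv), where δ_H(uv) is the set of edges of H between {u,v} and (N_H(u) ∪ N_H(v)) \ {u,v}. -/

import Mathlib

open Finset

lemma count_pairs {n : ℕ} (e : Sym2 (Fin n)) (he : ¬ e.IsDiag) :
    ∑ u : Fin n, ∑ v : Fin n,
      (if u < v ∧ ((u ∈ e ∨ v ∈ e) ∧ ¬(u ∈ e ∧ v ∈ e)) then (1:ℝ) else 0)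
    = 2 * n - 4 := by
  classical
  induction e using Sym2.ind with
  | _ a b =>
  have hab : a ≠ b := by simpa using he
  have hn : 2 ≤ n := by
    have : Nontrivial (Fin n) := ⟨a, b, hab⟩
    have h1 := Fintype.one_lt_card_iff_nontrivial.mpr this
    simp at h1; omega
  have hcard2 : (univ.filter (fun v : Fin n => v ∈ (s(a, b) : Sym2 (Fin n)))).card = 2 := by
    have h2 : univ.filter (fun v : Fin n => v ∈ (s(a, b) : Sym2 (Fin n))) = {a, b} := by
      ext x; simp [Sym2.mem_iff]
    rw [h2, card_insert_of_notMem (by simp [hab]), card_singleton]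
  set Q : Fin n → Fin n → Prop := fun u v =>
    (u ∈ (s(a,b) : Sym2 (Fin n)) ∨ v ∈ (s(a,b) : Sym2 (Fin n))) ∧
      ¬(u ∈ (s(a,b) : Sym2 (Fin n)) ∧ v ∈ (s(a,b) : Sym2 (Fin n))) with hQ
  have hQsymm : ∀ u v, Q u v ↔ Q v u := by
    intro u v; simp [hQ]; tauto
  have hQne : ∀ u v, Q u v → u ≠ v := by
    intro u v h huv
    subst huv
    exact h.2 ⟨h.1.elim id id, h.1.elim id id⟩
  have hF : ∑ u : Fin n, ∑ v : Fin n, (if Q u v then (1:ℝ) else 0) = 4 * n - 8 := by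
    have hrow : ∀ u : Fin n, (∑ v : Fin n, (if Q u v then (1:ℝ) else 0))
        = if u ∈ (s(a,b) : Sym2 (Fin n)) then (n:ℝ) - 2 else 2 := by
      intro u
      by_cases hu : u ∈ (s(a,b) : Sym2 (Fin n))
      · rw [if_pos hu]
        have hu' : u = a ∨ u = b := by simpa using hu
        have hiff : ∀ v : Fin n, Q u v ↔ ¬ v ∈ (s(a,b) : Sym2 (Fin n)) := by
          intro v; simp only [hQ, Sym2.mem_iff]; tauto
        calc ∑ v : Fin n, (if Q u v then (1:ℝ) else 0)
            = ∑ v : Fin n, (if ¬ v ∈ (s(a,b) : Sym2 (Fin n)) then (1:ℝ) else 0) := by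
              refine Finset.sum_congr rfl fun v _ => ?_
              exact if_congr (hiff v) rfl rfl
          _ = ((univ.filter (fun v : Fin n => ¬ v ∈ (s(a,b) : Sym2 (Fin n)))).card : ℝ) := by
              rw [Finset.sum_boole]
          _ = (n:ℝ) - 2 := by
              rw [Finset.filter_not, card_sdiff_of_subset (filter_subset _ _), hcard2, card_univ,
                Fintype.card_fin]
              push_cast [Nat.cast_sub hn]
              ring
      · rw [if_neg hu]
        have hu' : ¬(u = a ∨ u = b) := by simpa using hu
        have hiff : ∀ v : Fin n, Q u v ↔ v ∈ (s(a,b) : Sym2 (Fin n)) := by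
          intro v; simp only [hQ, Sym2.mem_iff]; tauto
        calc ∑ v : Fin n, (if Q u v then (1:ℝ) else 0)
            = ∑ v : Fin n, (if v ∈ (s(a,b) : Sym2 (Fin n)) then (1:ℝ) else 0) := by
              refine Finset.sum_congr rfl fun v _ => ?_
              exact if_congr (hiff v) rfl rfl
          _ = ((univ.filter (fun v : Fin n => v ∈ (s(a,b) : Sym2 (Fin n)))).card : ℝ) := by
              rw [Finset.sum_boole]
          _ = 2 := by rw [hcard2]; norm_num
    rw [Finset.sum_congr rfl fun u _ => hrow u, Finset.sum_ite, Finset.sum_const,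
      Finset.sum_const, hcard2, Finset.filter_not, card_sdiff_of_subset (filter_subset _ _), hcard2,
      card_univ, Fintype.card_fin]
    simp only [nsmul_eq_mul, smul_eq_mul]
    rw [Nat.cast_sub hn]
    push_cast
    ring
  have hsplit : ∀ u v : Fin n,
      (if Q u v then (1:ℝ) else 0)
      = (if u < v ∧ Q u v then (1:ℝ) else 0) + (if v < u ∧ Q u v then (1:ℝ) else 0) := by
    intro u v
    by_cases h : Q u v
    · rcases lt_or_gt_of_ne (hQne u v h) with h' | h'
      · rw [if_pos h, if_pos ⟨h', h⟩, if_neg (by rintro ⟨h'', -⟩; exact absurd h'' (asymm h'))]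
        ring
      · rw [if_pos h, if_neg (by rintro ⟨h'', -⟩; exact absurd h'' (asymm h')), if_pos ⟨h', h⟩]
        ring
    · simp [h]
  have hswap : ∑ u : Fin n, ∑ v : Fin n, (if v < u ∧ Q u v then (1:ℝ) else 0)
      = ∑ u : Fin n, ∑ v : Fin n, (if u < v ∧ Q u v then (1:ℝ) else 0) := by
    rw [Finset.sum_comm]
    refine Finset.sum_congr rfl fun u _ => Finset.sum_congr rfl fun v _ => ?_
    exact if_congr (and_congr Iff.rfl (hQsymm v u)) rfl rfl
  have key : 2 * ∑ u : Fin n, ∑ v : Fin n, (if u < v ∧ Q u v then (1:ℝ) else 0)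
      = 4 * n - 8 := by
    rw [← hF]
    simp_rw [hsplit, Finset.sum_add_distrib]
    rw [hswap, two_mul]
  have goal := key
  linarith [key]


/-- For a spanning subgraph `H` of `K_n` and `c : E(K_n) → {−1, 1}`, the sum over all
unordered pairs `uv` of distinct vertices of `c(δ_H(uv))` equals `∑_{uv ∈ E(H)} (2n−4)·c(uv)`,
where `δ_H(uv)` is the set of edges of `H` between `{u,v}` and `(N_H(u) ∪ N_H(v)) \ {u,v}`,
i.e. the edges of `H` with exactly one endpoint in `{u, v}`. -/
theorem deltaSum_identity (n : ℕ) (H : SimpleGraph (Fin n)) [DecidableRel H.Adj]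
    (c : Sym2 (Fin n) → ℝ)
    (hc : ∀ e ∈ (⊤ : SimpleGraph (Fin n)).edgeFinset, c e = 1 ∨ c e = -1) :
    ∑ u : Fin n, ∑ v ∈ Finset.univ.filter (fun v : Fin n => u < v),
      ∑ e ∈ H.edgeFinset.filter (fun e => (u ∈ e ∨ v ∈ e) ∧ ¬(u ∈ e ∧ v ∈ e)), c e
    = ∑ e ∈ H.edgeFinset, (2 * (n : ℝ) - 4) * c e := by
  classical
  have step1 : ∀ u : Fin n,
      (∑ v ∈ Finset.univ.filter (fun v : Fin n => u < v),
        ∑ e ∈ H.edgeFinset.filter (fun e => (u ∈ e ∨ v ∈ e) ∧ ¬(u ∈ e ∧ v ∈ e)), c e)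
      = ∑ e ∈ H.edgeFinset, ∑ v : Fin n,
          (if u < v ∧ ((u ∈ e ∨ v ∈ e) ∧ ¬(u ∈ e ∧ v ∈ e)) then c e else 0) := by
    intro u
    rw [Finset.sum_filter]
    have h2 : ∀ v : Fin n,
        (if u < v then
          ∑ e ∈ H.edgeFinset.filter (fun e => (u ∈ e ∨ v ∈ e) ∧ ¬(u ∈ e ∧ v ∈ e)), c e
        else 0)
        = ∑ e ∈ H.edgeFinset,
            (if u < v ∧ ((u ∈ e ∨ v ∈ e) ∧ ¬(u ∈ e ∧ v ∈ e)) then c e else 0) := by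
      intro v
      by_cases h : u < v
      · rw [if_pos h, Finset.sum_filter]
        exact Finset.sum_congr rfl fun e _ => (if_congr (and_iff_right h).symm rfl rfl)
      · rw [if_neg h]
        exact (Finset.sum_eq_zero fun e _ => if_neg fun hh => h hh.1).symm
    simp_rw [h2]
    exact Finset.sum_comm
  simp_rw [step1]
  rw [Finset.sum_comm]
  refine Finset.sum_congr rfl fun e he => ?_
  have hnd : ¬ e.IsDiag :=
    SimpleGraph.not_isDiag_of_mem_edgeSet H (SimpleGraph.mem_edgeFinset.mp he)
  have hsplit : ∀ u v : Fin n,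
      (if u < v ∧ ((u ∈ e ∨ v ∈ e) ∧ ¬(u ∈ e ∧ v ∈ e)) then c e else 0)
      = (if u < v ∧ ((u ∈ e ∨ v ∈ e) ∧ ¬(u ∈ e ∧ v ∈ e)) then (1:ℝ) else 0) * c e := by
    intro u v; split <;> simp
  simp_rw [hsplit, ← Finset.sum_mul]
  rw [count_pairs e hnd]
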